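/- Let N ≥ 1, let α ∈ (0,1), and let T : ℝ^N → ℝ^N be an α-averaged operator with Fix T ≠ ∅. Let γ ∈ [0,1) be a constant satisfying (1 − γ)² > (α/(1−α))·γ·(1 + γ). Then the sequence defined by x_{−1} = x₀ ∈ ℝ^N and x_{k+1} = T(x_k + γ·(x_k − x_{k−1})) converges to a point of Fix T. -/

import Mathlib

open Filter Topology

/-- `T` is an `α`-averaged operator on `ℝ^N` (Euclidean norm). -/
def IsAveragedOp {N : ℕ} (α : ℝ)
    (T : EuclideanSpace ℝ (Fin N) → EuclideanSpace ℝ (Fin N)) : Prop :=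
  ∀ x y : EuclideanSpace ℝ (Fin N),
    ‖T x - T y‖ ^ 2 + ((1 - α) / α) * ‖(x - T x) - (y - T y)‖ ^ 2 ≤ ‖x - y‖ ^ 2

lemma aux_summable_of_rec {p D : ℕ → ℝ} {γ c : ℝ} (hγ0 : 0 ≤ γ) (hγ1 : γ < 1)
    (hp0 : ∀ k, 0 ≤ p k) (hD : Summable D) (hD0 : ∀ k, 0 ≤ D k) (hc : 0 ≤ c)
    (hrec : ∀ k, p (k + 1) ≤ γ * p k + c * D k) : Summable p := by
  set M : ℝ := (p 0 + c * ∑' k, D k) / (1 - γ) with hM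
  have htsum0 : 0 ≤ ∑' k, D k := tsum_nonneg hD0
  have hM0 : 0 ≤ M := by
    apply div_nonneg _ (by linarith)
    have := hp0 0
    nlinarith
  apply summable_of_sum_range_le hp0 (c := M)
  intro n
  match n with
  | 0 => simpa using hM0
  | Nat.succ n =>
    have h1 : ∑ i ∈ Finset.range (n + 1), p i = (∑ i ∈ Finset.range n, p (i + 1)) + p 0 :=
      Finset.sum_range_succ' p n
    have h2 : ∑ i ∈ Finset.range n, p (i + 1) ≤ γ * ∑ i ∈ Finset.range n, p i + c * ∑ i ∈ Finset.range n, D i := by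
      rw [Finset.mul_sum, Finset.mul_sum, ← Finset.sum_add_distrib]
      exact Finset.sum_le_sum fun i _ => hrec i
    have h3 : ∑ i ∈ Finset.range n, p i ≤ ∑ i ∈ Finset.range (n + 1), p i := by
      rw [Finset.sum_range_succ]; have := hp0 n; linarith
    have h4 : ∑ i ∈ Finset.range n, D i ≤ ∑' k, D k := Summable.sum_le_tsum _ (fun i _ => hD0 i) hD
    have h5 : ∑ i ∈ Finset.range (n + 1), p i ≤ p 0 + γ * ∑ i ∈ Finset.range (n + 1), p i + c * ∑' k, D k := by
      nlinarith
    have : (1 - γ) * ∑ i ∈ Finset.range (n + 1), p i ≤ p 0 + c * ∑' k, D k := by nlinarith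
    rw [hM, le_div_iff₀ (by linarith)]
    linarith

lemma aux_converges {a p : ℕ → ℝ} (ha0 : ∀ k, 0 ≤ a k) (hp : Summable p)
    (hp0 : ∀ k, 0 ≤ p k) (hstep : ∀ k, a (k + 1) ≤ a k + p k) :
    ∃ L, Tendsto a atTop (𝓝 L) := by
  set b : ℕ → ℝ := fun k => a k - ∑ i ∈ Finset.range k, p i with hb
  have hanti : Antitone b := by
    apply antitone_nat_of_succ_le
    intro k
    simp only [hb, Finset.sum_range_succ]
    have := hstep k
    linarith
  have hbdd : BddBelow (Set.range b) := by
    refine ⟨-∑' k, p k, ?_⟩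
    rintro y ⟨k, rfl⟩
    have h4 : ∑ i ∈ Finset.range k, p i ≤ ∑' k, p k := Summable.sum_le_tsum _ (fun i _ => hp0 i) hp
    have := ha0 k
    simp only [hb]
    linarith
  have hbt : Tendsto b atTop (𝓝 (⨅ k, b k)) := tendsto_atTop_ciInf hanti hbdd
  have hsum : Tendsto (fun k => ∑ i ∈ Finset.range k, p i) atTop (𝓝 (∑' k, p k)) :=
    hp.hasSum.tendsto_sum_nat
  refine ⟨(⨅ k, b k) + ∑' k, p k, ?_⟩
  have : a = fun k => b k + ∑ i ∈ Finset.range k, p i := by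
    funext k; simp [hb]
  rw [this]
  exact hbt.add hsum

lemma aux_key {E : Type*} [NormedAddCommGroup E] [InnerProductSpace ℝ E]
    {β γ : ℝ} (hβ : 0 < β) (hγ0 : 0 ≤ γ)
    (z x0 x1 x2 : E)
    (hin : ‖x2 - z‖ ^ 2 + β * ‖(x1 + γ • (x1 - x0)) - x2‖ ^ 2
      ≤ ‖(x1 + γ • (x1 - x0)) - z‖ ^ 2) :
    ‖x2 - z‖ ^ 2 ≤ ‖x1 - z‖ ^ 2 + γ * (‖x1 - z‖ ^ 2 - ‖x0 - z‖ ^ 2)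
      + (γ * (1 + γ) + β * γ * (1 - γ)) * ‖x1 - x0‖ ^ 2
      - β * (1 - γ) * ‖x2 - x1‖ ^ 2 := by
  set u := x1 - z with hu
  set v := x0 - z with hv
  set e := x1 - x0 with he
  set q := x2 - x1 with hq
  have hyz : (x1 + γ • (x1 - x0)) - z = u + γ • e := by
    simp only [hu, he]; module
  have hyx2 : (x1 + γ • (x1 - x0)) - x2 = γ • e - q := by
    simp only [he, hq]; module
  rw [hyz, hyx2] at hin
  have h1 : ‖u + γ • e‖ ^ 2 = ‖u‖ ^ 2 + 2 * (γ * inner ℝ u e) + γ ^ 2 * ‖e‖ ^ 2 := by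
    rw [@norm_add_sq_real, real_inner_smul_right, norm_smul, Real.norm_eq_abs, mul_pow, sq_abs]
  have hveq : v = u - e := by simp only [hu, hv, he]; module
  have h2 : ‖v‖ ^ 2 = ‖u‖ ^ 2 - 2 * inner ℝ u e + ‖e‖ ^ 2 := by
    rw [hveq, @norm_sub_sq_real]
  have h3 : ‖γ • e - q‖ ^ 2 = γ ^ 2 * ‖e‖ ^ 2 - 2 * (γ * inner ℝ e q) + ‖q‖ ^ 2 := by
    rw [@norm_sub_sq_real, real_inner_smul_left, norm_smul, Real.norm_eq_abs, mul_pow, sq_abs]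
  have h4 : 2 * (inner ℝ e q : ℝ) ≤ ‖e‖ ^ 2 + ‖q‖ ^ 2 := by
    have := sq_nonneg ‖e - q‖
    rw [@norm_sub_sq_real] at this
    linarith
  nlinarith [mul_le_mul_of_nonneg_left h4 (mul_nonneg hβ.le hγ0)]


set_option maxHeartbeats 1000000 in
/-- Inertial iterations with constant parameter `γ ∈ [0,1)` satisfying
`(1 − γ)² > (α/(1−α)) γ (1+γ)` converge to a fixed point. -/
theorem stmt_3 {N : ℕ} (hN : 1 ≤ N) {α : ℝ} (hα : α ∈ Set.Ioo (0 : ℝ) 1)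
    (T : EuclideanSpace ℝ (Fin N) → EuclideanSpace ℝ (Fin N))
    (hT : IsAveragedOp α T) (hfix : ∃ z, T z = z)
    (γ : ℝ) (hγ : γ ∈ Set.Ico (0 : ℝ) 1)
    (hcond : (α / (1 - α)) * γ * (1 + γ) < (1 - γ) ^ 2)
    (x₀ : EuclideanSpace ℝ (Fin N)) (x : ℕ → EuclideanSpace ℝ (Fin N))
    (hx0 : x 0 = x₀)
    -- first step, with the convention `x_{-1} = x₀`:
    (hx1 : x 1 = T (x 0 + γ • (x 0 - x 0)))
    (hrec : ∀ k, x (k + 2) = T (x (k + 1) + γ • (x (k + 1) - x k))) :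
    ∃ xbar, T xbar = xbar ∧ Tendsto x atTop (𝓝 xbar) := by
  obtain ⟨hα0, hα1⟩ := hα
  obtain ⟨hγ0, hγ1⟩ := hγ
  obtain ⟨z₀, hz₀⟩ := hfix
  have hβ : 0 < (1 - α) / α := div_pos (by linarith) hα0
  set β : ℝ := (1 - α) / α with hβdef
  have hcond' : γ * (1 + γ) < β * (1 - γ) ^ 2 := by
    have hb1 : β * (α / (1 - α)) = 1 := by
      rw [hβdef]; field_simp
    calc γ * (1 + γ) = β * (α / (1 - α)) * γ * (1 + γ) := by rw [hb1]; ring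
      _ = β * (α / (1 - α) * γ * (1 + γ)) := by ring
      _ < β * (1 - γ) ^ 2 := by
          exact mul_lt_mul_of_pos_left hcond hβ
  set c : ℝ := γ * (1 + γ) + β * γ * (1 - γ) with hcdef
  have hc0 : 0 ≤ c := by
    have : 0 ≤ β * γ * (1 - γ) :=
      mul_nonneg (mul_nonneg hβ.le hγ0) (by linarith)
    nlinarith
  set δ : ℝ := β * (1 - γ) ^ 2 - γ * (1 + γ) with hδdef
  have hδ : 0 < δ := by rw [hδdef]; linarith
  have hβc : β * (1 - γ) - c = δ := by rw [hδdef, hcdef]; ring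
  -- key inequality
  have key : ∀ z, T z = z → ∀ k,
      ‖x (k + 2) - z‖ ^ 2 ≤ ‖x (k + 1) - z‖ ^ 2
        + γ * (‖x (k + 1) - z‖ ^ 2 - ‖x k - z‖ ^ 2)
        + c * ‖x (k + 1) - x k‖ ^ 2 - β * (1 - γ) * ‖x (k + 2) - x (k + 1)‖ ^ 2 := by
    intro z hz k
    have h := hT (x (k + 1) + γ • (x (k + 1) - x k)) z
    rw [hz, ← hrec k] at h
    simp only [sub_self, sub_zero] at h
    exact aux_key hβ hγ0 z (x k) (x (k + 1)) (x (k + 2)) h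
  set D : ℕ → ℝ := fun k => ‖x (k + 1) - x k‖ ^ 2 with hDdef
  have hD0 : ∀ k, 0 ≤ D k := fun k => sq_nonneg _
  set a : ℕ → ℝ := fun k => ‖x k - z₀‖ ^ 2 with hadef
  have ha0 : ∀ k, 0 ≤ a k := fun k => sq_nonneg _
  set θ : ℕ → ℝ := fun k => a (k + 1) - γ * a k + c * D k with hθdef
  have hθstep : ∀ k, θ (k + 1) + δ * D (k + 1) ≤ θ k := by
    intro k
    have hk := key z₀ hz₀ k
    have hrw : β * (1 - γ) * ‖x (k + 2) - x (k + 1)‖ ^ 2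
        = c * ‖x (k + 2) - x (k + 1)‖ ^ 2 + δ * ‖x (k + 2) - x (k + 1)‖ ^ 2 := by
      rw [← hβc]; ring
    simp only [hθdef, hadef, hDdef]
    linarith [hk, hrw]
  have hθmono : Antitone θ := by
    apply antitone_nat_of_succ_le
    intro k
    have := hθstep k
    linarith [mul_nonneg hδ.le (hD0 (k + 1))]
  set M : ℝ := max (θ 0) 0 with hMdef
  set B : ℝ := max (a 0) (M / (1 - γ)) with hBdef
  have hMB : M ≤ (1 - γ) * B := by
    have h3 : M / (1 - γ) ≤ B := le_max_right _ _
    rw [div_le_iff₀ (by linarith)] at h3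
    linarith [h3]
  have hB : ∀ k, a k ≤ B := by
    intro k
    induction k with
    | zero => exact le_max_left _ _
    | succ n ih =>
      have h1 : a (n + 1) - γ * a n ≤ θ n := by
        simp only [hθdef]
        linarith [mul_nonneg hc0 (hD0 n)]
      have h2 : θ n ≤ M := le_trans (hθmono (Nat.zero_le n)) (le_max_left _ _)
      linarith [mul_le_mul_of_nonneg_left ih hγ0, hMB, h1, h2]
  have hB0 : 0 ≤ B := le_trans (ha0 0) (hB 0)
  have hθlb : ∀ n, -(γ * B) ≤ θ n := by
    intro n
    have h1 : γ * a n ≤ γ * B := mul_le_mul_of_nonneg_left (hB n) hγ0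
    simp only [hθdef]
    linarith [ha0 (n + 1), mul_nonneg hc0 (hD0 n), h1]
  -- summability of D
  have htel : ∀ n, δ * ∑ k ∈ Finset.range n, D (k + 1) ≤ θ 0 - θ n := by
    intro n
    induction n with
    | zero => simp
    | succ n ih =>
      rw [Finset.sum_range_succ, mul_add]
      have := hθstep n
      linarith
  have hDsum : Summable D := by
    apply summable_of_sum_range_le hD0 (c := D 0 + (θ 0 + γ * B) / δ)
    intro n
    have hfrac0 : 0 ≤ (θ 0 + γ * B) / δ := by
      apply div_nonneg _ hδ.le
      have := hθlb 0
      linarith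
    match n with
    | 0 => simp; positivity
    | Nat.succ n =>
      have h1 : ∑ k ∈ Finset.range (n + 1), D k = (∑ k ∈ Finset.range n, D (k + 1)) + D 0 :=
        Finset.sum_range_succ' D n
      have h2 := htel n
      have h3 := hθlb n
      have h4 : ∑ k ∈ Finset.range n, D (k + 1) ≤ (θ 0 + γ * B) / δ := by
        rw [le_div_iff₀ hδ]
        nlinarith [h2, h3]
      linarith
  -- differences tend to zero
  have hDlim : Tendsto D atTop (𝓝 0) := hDsum.tendsto_atTop_zero
  have he0 : Tendsto (fun k => x (k + 1) - x k) atTop (𝓝 0) := by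
    rw [tendsto_zero_iff_norm_tendsto_zero]
    have hs : Tendsto (fun k => Real.sqrt (D k)) atTop (𝓝 0) := by
      have := (Real.continuous_sqrt.tendsto 0).comp hDlim
      simpa [Function.comp_def] using this
    refine hs.congr fun k => ?_
    simp only [hDdef]
    exact Real.sqrt_sq (norm_nonneg _)
  -- convergence of ‖x k - z‖² for every fixed point z
  have hconv : ∀ z, T z = z → ∃ L, Tendsto (fun k => ‖x k - z‖ ^ 2) atTop (𝓝 L) := by
    intro z hz
    set p : ℕ → ℝ := fun k => max (‖x (k + 1) - z‖ ^ 2 - ‖x k - z‖ ^ 2) 0 with hpdef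
    have hp0 : ∀ k, 0 ≤ p k := fun k => le_max_right _ _
    have hrecp : ∀ k, p (k + 1) ≤ γ * p k + c * D k := by
      intro k
      have hk := key z hz k
      have hle : ‖x (k + 1) - z‖ ^ 2 - ‖x k - z‖ ^ 2 ≤ p k := le_max_left _ _
      have hγs := mul_le_mul_of_nonneg_left hle hγ0
      have hnn : 0 ≤ β * (1 - γ) * ‖x (k + 2) - x (k + 1)‖ ^ 2 :=
        mul_nonneg (mul_nonneg hβ.le (by linarith)) (sq_nonneg _)
      have h2 : 0 ≤ γ * p k + c * D k :=
        add_nonneg (mul_nonneg hγ0 (hp0 k)) (mul_nonneg hc0 (hD0 k))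
      apply max_le _ h2
      simp only [hDdef]
      linarith [hk, hγs, hnn]
    have hpsum : Summable p := aux_summable_of_rec hγ0 hγ1 hp0 hDsum hD0 hc0 hrecp
    apply aux_converges (fun k => sq_nonneg _) hpsum hp0
    intro k
    have : ‖x (k + 1) - z‖ ^ 2 - ‖x k - z‖ ^ 2 ≤ p k := le_max_left _ _
    linarith
  -- T is nonexpansive, hence continuous
  have hlip : LipschitzWith 1 T := by
    apply LipschitzWith.of_dist_le_mul
    intro u v
    rw [dist_eq_norm, dist_eq_norm, NNReal.coe_one, one_mul]
    have h := hT u v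
    rw [← hβdef] at h
    have h2 : 0 ≤ β * ‖(u - T u) - (v - T v)‖ ^ 2 :=
      mul_nonneg hβ.le (sq_nonneg _)
    calc ‖T u - T v‖ = Real.sqrt (‖T u - T v‖ ^ 2) := (Real.sqrt_sq (norm_nonneg _)).symm
      _ ≤ Real.sqrt (‖u - v‖ ^ 2) := Real.sqrt_le_sqrt (by linarith)
      _ = ‖u - v‖ := Real.sqrt_sq (norm_nonneg _)
  -- bounded, extract convergent subsequence
  have hxball : ∀ k, x k ∈ Metric.closedBall z₀ (Real.sqrt B) := by
    intro k
    rw [Metric.mem_closedBall, dist_eq_norm]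
    calc ‖x k - z₀‖ = Real.sqrt (‖x k - z₀‖ ^ 2) := (Real.sqrt_sq (norm_nonneg _)).symm
      _ ≤ Real.sqrt B := Real.sqrt_le_sqrt (hB k)
  obtain ⟨w, -, φ, hφ, hxa⟩ :=
    tendsto_subseq_of_bounded Metric.isBounded_closedBall hxball
  have hφtop : Tendsto φ atTop atTop := hφ.tendsto_atTop
  have hx1lim : Tendsto (fun n => x (φ n + 1)) atTop (𝓝 w) := by
    have h := hxa.add (he0.comp hφtop)
    simp only [Function.comp] at h ⊢
    refine (by simpa using h : Tendsto _ atTop (𝓝 w)).congr fun n => ?_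
    abel
  have hφ1top : Tendsto (fun n => φ n + 1) atTop atTop :=
    (tendsto_add_atTop_nat 1).comp hφtop
  have hx2lim : Tendsto (fun n => x (φ n + 2)) atTop (𝓝 w) := by
    have h := hx1lim.add (he0.comp hφ1top)
    rw [add_zero] at h
    simp only [Function.comp] at h
    refine h.congr fun n => ?_
    rw [show φ n + 1 + 1 = φ n + 2 from rfl]
    abel
  have helim : Tendsto (fun n => x (φ n + 1) - x (φ n)) atTop (𝓝 0) := he0.comp hφtop
  have hylim : Tendsto (fun n => x (φ n + 1) + γ • (x (φ n + 1) - x (φ n)))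
      atTop (𝓝 w) := by
    have h := hx1lim.add (helim.const_smul γ)
    simpa using h
  have hTy : Tendsto (fun n => T (x (φ n + 1) + γ • (x (φ n + 1) - x (φ n))))
      atTop (𝓝 (T w)) := ((hlip.continuous.tendsto w).comp hylim)
  have hTyx : (fun n => T (x (φ n + 1) + γ • (x (φ n + 1) - x (φ n))))
      = fun n => x (φ n + 2) := by
    funext n
    exact (hrec (φ n)).symm
  rw [hTyx] at hTy
  have hw : T w = w := tendsto_nhds_unique hTy hx2lim
  -- conclude
  obtain ⟨L, hL⟩ := hconv w hw
  have hsub0 : Tendsto (fun n => ‖x (φ n) - w‖ ^ 2) atTop (𝓝 0) := by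
    have h1 : Tendsto (fun n => x (φ n) - w) atTop (𝓝 (w - w)) :=
      hxa.sub tendsto_const_nhds
    rw [sub_self] at h1
    have h2 := (h1.norm).pow 2
    simpa using h2
  have hL0 : L = 0 := tendsto_nhds_unique (hL.comp hφtop) hsub0
  refine ⟨w, hw, ?_⟩
  rw [tendsto_iff_norm_sub_tendsto_zero]
  have hs : Tendsto (fun k => Real.sqrt (‖x k - w‖ ^ 2)) atTop (𝓝 0) := by
    rw [hL0] at hL
    have h := (Real.continuous_sqrt.tendsto 0).comp hL
    rw [Real.sqrt_zero] at h
    exact h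
  refine hs.congr fun k => ?_
  exact Real.sqrt_sq (norm_nonneg _)
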